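/- Let G be an infinite FC-group with finitely many automorphism orbits which is a non-abelian p-group. Then there exist h ∈ G' and g ∈ G \ G' with |h| = |g|, i.e., the spectrum of orders of elements of the derived subgroup meets the spectrum of orders of elements outside the derived subgroup. -/

import Mathlib

/-- The number of automorphism orbits of a group `G`: the number of orbits of the
natural action of `Aut(G)` on `G`. -/
noncomputable def omegaOrbits (G : Type*) [Group G] : ℕ :=
  Nat.card (Quotient (MulAction.orbitRel (MulAut G) G))

/-- `G` is an FC-group: every element has a finite conjugacy class. -/
def IsFCGroup (G : Type*) [Group G] : Prop :=
  ∀ g : G, {h : G | IsConj g h}.Finite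

/-- `G` has finitely many automorphism orbits. -/
def HasFinitelyManyAutOrbits (G : Type*) [Group G] : Prop :=
  Finite (Quotient (MulAction.orbitRel (MulAut G) G))

namespace St11

open scoped commutatorElement

variable {G : Type*} [Group G]

/-- conjugacy class of `a` as a set -/
def cls (a : G) : Set G := {b | IsConj a b}

lemma self_mem_cls (a : G) : a ∈ cls a := IsConj.refl a

lemma conj_mem_cls {a b : G} (hb : b ∈ cls a) (w : G) : w * b * w⁻¹ ∈ cls a :=
  hb.trans (isConj_iff.mpr ⟨w, rfl⟩)

lemma cls_finite (hFC : ∀ g : G, {h | IsConj g h}.Finite) (a : G) : (cls a).Finite := hFC a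

lemma finite_of_ker_range {H K : Type*} [Group H] [Group K] (f : H →* K)
    (h1 : Finite f.ker) (h2 : Finite f.range) : Finite H := by
  have : Finite (H ⧸ f.ker) := Finite.of_equiv _ (QuotientGroup.quotientKerEquivRange f).symm.toEquiv
  exact Finite.of_equiv _ (Subgroup.groupEquivQuotientProdSubgroup (s := f.ker)).symm

lemma finiteIndex_centralizer_singleton (hFC : ∀ g : G, {h | IsConj g h}.Finite) (a : G) :
    (Subgroup.centralizer {a}).FiniteIndex := by
  have horb : (MulAction.orbit (ConjAct G) a).Finite :=
    (hFC a).subset (fun h hh => (ConjAct.mem_orbit_conjAct.mp hh).symm)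
  have hidx := MulAction.index_stabilizer (ConjAct G) a
  have hne : (MulAction.stabilizer (ConjAct G) a).index ≠ 0 := by
    rw [hidx]
    exact ((Set.ncard_pos horb).mpr ⟨a, MulAction.mem_orbit_self a⟩).ne'
  rw [Subgroup.centralizer_eq_comap_stabilizer]
  exact ⟨by
    convert hne using 1
    exact Subgroup.index_comap_of_surjective _ (MulEquiv.surjective _)⟩

lemma centralizer_empty : Subgroup.centralizer (∅ : Set G) = ⊤ := by
  ext g; simp [Subgroup.mem_centralizer_iff]

lemma centralizer_insert (a : G) (T : Set G) :
    Subgroup.centralizer (insert a T) = Subgroup.centralizer {a} ⊓ Subgroup.centralizer T := by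
  ext g
  simp only [Subgroup.mem_inf, Subgroup.mem_centralizer_iff, Set.mem_insert_iff,
    Set.mem_singleton_iff]
  constructor
  · exact fun h => ⟨fun s hs => h s (Or.inl hs), fun s hs => h s (Or.inr hs)⟩
  · rintro ⟨h1, h2⟩ s (rfl | hs)
    · exact h1 s rfl
    · exact h2 s hs

lemma finiteIndex_centralizer_finite (hFC : ∀ g : G, {h | IsConj g h}.Finite)
    {T : Set G} (hT : T.Finite) : (Subgroup.centralizer T).FiniteIndex := by
  refine Set.Finite.induction_on _ hT ?_ ?_
  · rw [centralizer_empty]; infer_instance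
  · intro a T _ _ ih
    rw [centralizer_insert]
    haveI := ih
    haveI := finiteIndex_centralizer_singleton hFC a
    infer_instance

/-- centralizer of a conjugation-closed set is normal -/
lemma centralizer_normal {T : Set G} (hT : ∀ b ∈ T, ∀ w : G, w * b * w⁻¹ ∈ T) :
    (Subgroup.centralizer T).Normal := by
  constructor
  intro c hc w
  rw [Subgroup.mem_centralizer_iff] at hc ⊢
  intro s hs
  have hs' : w⁻¹ * s * w ∈ T := by
    have := hT s hs w⁻¹; simpa using this
  have := hc _ hs'
  -- (w⁻¹sw) c = c (w⁻¹sw)  ⟹ s (wcw⁻¹) = (wcw⁻¹) s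
  have h2 : w * (w⁻¹ * s * w * c) * w⁻¹ = w * (c * (w⁻¹ * s * w)) * w⁻¹ := by rw [this]
  calc s * (w * c * w⁻¹) = w * (w⁻¹ * s * w * c) * w⁻¹ := by group
    _ = w * (c * (w⁻¹ * s * w)) * w⁻¹ := h2
    _ = w * c * w⁻¹ * s := by group



lemma cls_map (φ : MulAut G) (a : G) : cls (φ a) = φ '' cls a := by
  ext h
  constructor
  · intro hh
    refine ⟨φ.symm h, ?_, by simp⟩
    show IsConj a (φ.symm h)
    have := φ.symm.toMonoidHom.map_isConj hh
    simpa using this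
  · rintro ⟨b, hb, rfl⟩
    exact φ.toMonoidHom.map_isConj hb

lemma exists_bounds (hfin : HasFinitelyManyAutOrbits G) :
    ∃ n : ℕ, (∀ x : G, (cls x).ncard ≤ n) ∧ (∀ x : G, orderOf x ≤ n) := by
  haveI : Finite (Quotient (MulAction.orbitRel (MulAut G) G)) := hfin
  set Q := Quotient (MulAction.orbitRel (MulAut G) G) with hQ
  let f : Q → ℕ := fun q => max ((cls q.out).ncard) (orderOf q.out)
  obtain ⟨n, hn⟩ := (Set.finite_range f).bddAbove
  have key : ∀ x : G, ∃ φ : MulAut G, (Quotient.mk'' x : Q).out = φ x := by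
    intro x
    have h := Quotient.mk_out (s := MulAction.orbitRel (MulAut G) G) x
    rw [MulAction.orbitRel_apply, MulAction.mem_orbit_iff] at h
    obtain ⟨φ, hφ⟩ := h
    exact ⟨φ, hφ.symm⟩
  refine ⟨n, fun x => ?_, fun x => ?_⟩
  · obtain ⟨φ, hφ⟩ := key x
    have h1 : (cls ((Quotient.mk'' x : Q).out)).ncard = (cls x).ncard := by
      rw [hφ, cls_map, Set.ncard_image_of_injective _ φ.injective]
    have h2 : f (Quotient.mk'' x) ≤ n := hn ⟨_, rfl⟩
    calc (cls x).ncard = _ := h1.symm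
      _ ≤ f (Quotient.mk'' x) := le_max_left _ _
      _ ≤ n := h2
  · obtain ⟨φ, hφ⟩ := key x
    have h1 : orderOf ((Quotient.mk'' x : Q).out) = orderOf x := by
      rw [hφ]
      exact orderOf_injective φ.toMonoidHom φ.injective x
    have h2 : f (Quotient.mk'' x) ≤ n := hn ⟨_, rfl⟩
    calc orderOf x = _ := h1.symm
      _ ≤ f (Quotient.mk'' x) := le_max_right _ _
      _ ≤ n := h2



variable {S : Set G}

lemma pull [DecidableEq G] (hconj : ∀ a ∈ S, ∀ w : G, w * a * w⁻¹ ∈ S) (l : List G) :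
    ∀ (a : G) (m : ℕ), (∀ b ∈ l, b ∈ S) → a ∈ S → m ≤ l.count a →
    ∃ l' : List G, (∀ b ∈ l', b ∈ S) ∧ l'.length + m = l.length ∧ l.prod = a ^ m * l'.prod := by
  induction l with
  | nil =>
      intro a m _ _ hm
      have : m = 0 := by simpa using hm
      subst this
      exact ⟨[], by simp, by simp, by simp⟩
  | cons b t ih =>
      intro a m hP ha hm
      cases m with
      | zero => exact ⟨b :: t, hP, by simp, by simp⟩
      | succ m' =>
        by_cases hb : b = a
        · subst hb
          have hcount : m' ≤ t.count b := by
            rw [List.count_cons_self] at hm; omega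
          obtain ⟨t', hP', hlen, hprod⟩ :=
            ih b m' (fun x hx => hP x (List.mem_cons_of_mem _ hx)) ha hcount
          refine ⟨t', hP', by simp only [List.length_cons]; omega, ?_⟩
          rw [List.prod_cons, hprod, pow_succ', mul_assoc]
        · have hcount : m' + 1 ≤ t.count a := by
            rwa [List.count_cons_of_ne hb] at hm
          obtain ⟨t', hP', hlen, hprod⟩ :=
            ih a (m' + 1) (fun x hx => hP x (List.mem_cons_of_mem _ hx)) ha hcount
          refine ⟨((a ^ (m' + 1))⁻¹ * b * (a ^ (m' + 1))) :: t', ?_, ?_, ?_⟩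
          · intro x hx
            rcases List.mem_cons.mp hx with rfl | hx
            · simpa using hconj b (hP b (List.mem_cons_self)) (a ^ (m' + 1))⁻¹
            · exact hP' x hx
          · simp only [List.length_cons] at hlen ⊢; omega
          · rw [List.prod_cons, List.prod_cons, hprod]
            simp [mul_assoc]

lemma rewrite_bdd [DecidableEq G] (hS : S.Finite) (hconj : ∀ a ∈ S, ∀ w : G, w * a * w⁻¹ ∈ S)
    (htor : ∀ a ∈ S, IsOfFinOrder a) (l : List G) (hP : ∀ b ∈ l, b ∈ S) :
    ∃ l' : List G, (∀ b ∈ l', b ∈ S) ∧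
      l'.length ≤ (∑ a ∈ hS.toFinset, (orderOf a - 1)) ∧ l'.prod = l.prod := by
  classical
  set B := ∑ a ∈ hS.toFinset, (orderOf a - 1) with hB
  have H : ∀ (N : ℕ) (l : List G), l.length ≤ N → (∀ b ∈ l, b ∈ S) →
      ∃ l' : List G, (∀ b ∈ l', b ∈ S) ∧ l'.length ≤ B ∧ l'.prod = l.prod := by
    intro N
    induction N with
    | zero =>
        intro l hlen hP
        exact ⟨l, hP, by omega, rfl⟩
    | succ N ihN =>
        intro l hlen hP
        by_cases hBl : l.length ≤ B
        · exact ⟨l, hP, hBl, rfl⟩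
        · -- pigeonhole
          have hsub : l.toFinset ⊆ hS.toFinset := by
            intro a ha
            rw [Set.Finite.mem_toFinset]
            exact hP a (List.mem_toFinset.mp ha)
          have hsum : (∑ a ∈ hS.toFinset, l.count a) = l.length := by
            rw [← Finset.sum_subset hsub (fun a _ ha => List.count_eq_zero_of_not_mem
              (fun hmem => ha (List.mem_toFinset.mpr hmem)))]
            have := Multiset.toFinset_sum_count_eq (l : Multiset G)
            simpa using this
          have hex : ∃ a ∈ hS.toFinset, orderOf a ≤ l.count a := by
            by_contra hc
            push_neg at hc
            have hle : ∀ a ∈ hS.toFinset, l.count a ≤ orderOf a - 1 := by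
              intro a ha
              have h1 := hc a ha
              have h2 : 0 < orderOf a := (htor a (hS.mem_toFinset.mp ha)).orderOf_pos
              omega
            have : l.length ≤ B := by
              rw [← hsum, hB]
              exact Finset.sum_le_sum hle
            omega
          obtain ⟨a, haT, hcount⟩ := hex
          have haS : a ∈ S := hS.mem_toFinset.mp haT
          have hapos : 0 < orderOf a := (htor a haS).orderOf_pos
          obtain ⟨l', hP', hlen', hprod'⟩ := pull hconj l a (orderOf a) hP haS hcount
          obtain ⟨l'', hP'', hlen'', hprod''⟩ := ihN l' (by omega) hP'
          refine ⟨l'', hP'', hlen'', ?_⟩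
          rw [hprod'', hprod', pow_orderOf_eq_one, one_mul]
  exact H l.length l le_rfl hP

lemma inv_list (htor : ∀ a ∈ S, IsOfFinOrder a) (l : List G) (hP : ∀ b ∈ l, b ∈ S) :
    ∃ l' : List G, (∀ b ∈ l', b ∈ S) ∧ l'.prod = (l.prod)⁻¹ := by
  induction l with
  | nil => exact ⟨[], by simp, by simp⟩
  | cons a t ih =>
      obtain ⟨t', hP', hprod'⟩ := ih (fun x hx => hP x (List.mem_cons_of_mem _ hx))
      have haS : a ∈ S := hP a (List.mem_cons_self)
      have hainv : a⁻¹ = a ^ (orderOf a - 1) := by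
        have h1 : 0 < orderOf a := (htor a haS).orderOf_pos
        have h2 : a * a ^ (orderOf a - 1) = 1 := by
          rw [← pow_succ']
          have : orderOf a - 1 + 1 = orderOf a := by omega
          rw [this, pow_orderOf_eq_one]
        exact (inv_eq_of_mul_eq_one_right h2).symm ▸ rfl
      refine ⟨t' ++ List.replicate (orderOf a - 1) a, ?_, ?_⟩
      · intro x hx
        rcases List.mem_append.mp hx with hx | hx
        · exact hP' x hx
        · rw [List.eq_of_mem_replicate hx]; exact haS
      · rw [List.prod_append, List.prod_replicate, hprod', List.prod_cons, mul_inv_rev, hainv]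

theorem dietzmann (hS : S.Finite) (hconj : ∀ a ∈ S, ∀ w : G, w * a * w⁻¹ ∈ S)
    (htor : ∀ a ∈ S, IsOfFinOrder a) : ((Subgroup.closure S : Subgroup G) : Set G).Finite := by
  classical
  set W : Set G := {z | ∃ l : List G, (∀ b ∈ l, b ∈ S) ∧ l.prod = z} with hW
  set B := ∑ a ∈ hS.toFinset, (orderOf a - 1) with hB
  -- W is the carrier of a subgroup
  have hone : (1 : G) ∈ W := ⟨[], by simp, by simp⟩
  have hmul : ∀ x ∈ W, ∀ y ∈ W, x * y ∈ W := by
    rintro x ⟨l1, h1, rfl⟩ y ⟨l2, h2, rfl⟩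
    refine ⟨l1 ++ l2, ?_, by rw [List.prod_append]⟩
    intro b hb
    rcases List.mem_append.mp hb with hb | hb
    · exact h1 b hb
    · exact h2 b hb
  have hinv : ∀ x ∈ W, x⁻¹ ∈ W := by
    rintro x ⟨l, hPl, rfl⟩
    obtain ⟨l', hP', hprod'⟩ := inv_list htor l hPl
    exact ⟨l', hP', hprod'⟩
  let Wsub : Subgroup G :=
    { carrier := W
      one_mem' := hone
      mul_mem' := fun ha hb => hmul _ ha _ hb
      inv_mem' := fun ha => hinv _ ha }
  have hle : Subgroup.closure S ≤ Wsub := by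
    rw [Subgroup.closure_le]
    intro a ha
    exact ⟨[a], by simpa using ha, by simp⟩
  -- W is finite
  have hWfin : W.Finite := by
    have hsub : W ⊆ (fun l : List ↥(hS.toFinset) => (l.map Subtype.val).prod) ''
        {l : List ↥(hS.toFinset) | l.length ≤ B} := by
      rintro z ⟨l, hPl, rfl⟩
      obtain ⟨l', hP', hlen', hprod'⟩ := rewrite_bdd hS hconj htor l hPl
      refine ⟨l'.pmap (fun b hb => (⟨b, hb⟩ : ↥(hS.toFinset)))
        (fun b hb => hS.mem_toFinset.mpr (hP' b hb)), ?_, ?_⟩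
      · simpa [List.length_pmap] using hlen'
      · dsimp only
        rw [List.map_pmap]
        simp only [List.pmap_eq_map, List.map_id']
        simpa using hprod'
    exact ((List.finite_length_le ↥(hS.toFinset) B).image _).subset hsub
  exact hWfin.subset hle


section PartC

def Tset (x g : ℕ → G) (j : ℕ) : Set G := ⋃ i ∈ Finset.range j, (cls (x i) ∪ cls (g i))

def Ycent (x g : ℕ → G) (j : ℕ) : Subgroup G := Subgroup.centralizer (Tset x g j)

def CsetC (a b : G) : Set G := {c | ∃ a' b', IsConj a a' ∧ IsConj b b' ∧ c = ⁅a', b'⁆}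

def Pset (x g : ℕ → G) (j : ℕ) : Set G := {1} ∪ ⋃ i ∈ Finset.range j, CsetC (g i) (x i)

def INVat (x g : ℕ → G) (j : ℕ) : Prop :=
  x j ∈ Ycent x g j ∧ g j ∈ Ycent x g j ∧ ⁅g j, x j⁆ ∉ Pset x g j

lemma Tset_congr {x g x' g' : ℕ → G} {j : ℕ} (h : ∀ i < j, x i = x' i ∧ g i = g' i) :
    Tset x g j = Tset x' g' j := by
  unfold Tset
  ext c
  simp only [Set.mem_iUnion, Finset.mem_range, exists_prop]
  constructor <;> rintro ⟨i, hi, hc⟩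
  · exact ⟨i, hi, by rw [← (h i hi).1, ← (h i hi).2]; exact hc⟩
  · exact ⟨i, hi, by rw [(h i hi).1, (h i hi).2]; exact hc⟩

lemma Pset_congr {x g x' g' : ℕ → G} {j : ℕ} (h : ∀ i < j, x i = x' i ∧ g i = g' i) :
    Pset x g j = Pset x' g' j := by
  unfold Pset
  ext c
  simp only [Set.mem_union, Set.mem_iUnion, Finset.mem_range, exists_prop]
  constructor <;> rintro (hc | ⟨i, hi, hc⟩)
  · exact Or.inl hc
  · exact Or.inr ⟨i, hi, by rw [← (h i hi).1, ← (h i hi).2]; exact hc⟩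
  · exact Or.inl hc
  · exact Or.inr ⟨i, hi, by rw [(h i hi).1, (h i hi).2]; exact hc⟩

lemma Tset_finite (hFC : ∀ g : G, {h | IsConj g h}.Finite) (x g : ℕ → G) (j : ℕ) :
    (Tset x g j).Finite :=
  Set.Finite.biUnion (Finset.range j).finite_toSet (fun i _ => (hFC (x i)).union (hFC (g i)))

lemma Tset_conj (x g : ℕ → G) (j : ℕ) :
    ∀ b ∈ Tset x g j, ∀ w : G, w * b * w⁻¹ ∈ Tset x g j := by
  intro b hb w
  simp only [Tset, Set.mem_iUnion, Finset.mem_range, exists_prop] at hb ⊢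
  obtain ⟨i, hi, hb | hb⟩ := hb
  · exact ⟨i, hi, Or.inl (conj_mem_cls hb w)⟩
  · exact ⟨i, hi, Or.inr (conj_mem_cls hb w)⟩

lemma CsetC_sub (a b : G) :
    CsetC a b ⊆ Set.image2 (fun a' b' => ⁅a', b'⁆) (cls a) (cls b) := by
  rintro c ⟨a', b', h1, h2, rfl⟩
  exact ⟨a', h1, b', h2, rfl⟩

lemma Pset_finite (hFC : ∀ g : G, {h | IsConj g h}.Finite) (x g : ℕ → G) (j : ℕ) :
    (Pset x g j).Finite := by
  refine (Set.finite_singleton 1).union ?_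
  refine Set.Finite.biUnion (Finset.range j).finite_toSet (fun i _ => ?_)
  exact (Set.Finite.image2 _ (hFC (g i)) (hFC (x i))).subset (CsetC_sub _ _)

lemma CsetC_conj {a b c : G} (hc : c ∈ CsetC a b) (w : G) : w * c * w⁻¹ ∈ CsetC a b := by
  obtain ⟨a', b', h1, h2, rfl⟩ := hc
  exact ⟨w * a' * w⁻¹, w * b' * w⁻¹, h1.trans (isConj_iff.mpr ⟨w, rfl⟩),
    h2.trans (isConj_iff.mpr ⟨w, rfl⟩), (conjugate_commutatorElement _ _ _)⟩

lemma Pset_conj (x g : ℕ → G) (j : ℕ) :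
    ∀ c ∈ Pset x g j, ∀ w : G, w * c * w⁻¹ ∈ Pset x g j := by
  intro c hc w
  rcases hc with hc | hc
  · rw [Set.mem_singleton_iff] at hc; subst hc
    exact Or.inl (by simp)
  · simp only [Set.mem_iUnion, Finset.mem_range, exists_prop] at hc
    obtain ⟨i, hi, hc⟩ := hc
    exact Or.inr (by
      simp only [Set.mem_iUnion, Finset.mem_range, exists_prop]
      exact ⟨i, hi, CsetC_conj hc w⟩)

lemma one_mem_Pset (x g : ℕ → G) (j : ℕ) : (1 : G) ∈ Pset x g j := Or.inl rfl

lemma mem_Tset_x {x g : ℕ → G} {i j : ℕ} (hij : i < j) : x i ∈ Tset x g j := by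
  simp only [Tset, Set.mem_iUnion, Finset.mem_range, exists_prop]
  exact ⟨i, hij, Or.inl (self_mem_cls _)⟩

lemma mem_Tset_g {x g : ℕ → G} {i j : ℕ} (hij : i < j) : g i ∈ Tset x g j := by
  simp only [Tset, Set.mem_iUnion, Finset.mem_range, exists_prop]
  exact ⟨i, hij, Or.inr (self_mem_cls _)⟩

lemma CsetC_mem_Pset {x g : ℕ → G} {i j : ℕ} (hij : i < j) {c : G}
    (hc : c ∈ CsetC (g i) (x i)) : c ∈ Pset x g j :=
  Or.inr (by
    simp only [Set.mem_iUnion, Finset.mem_range, exists_prop]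
    exact ⟨i, hij, hc⟩)

theorem stopping (hFC : ∀ g : G, {h : G | IsConj g h}.Finite) {n : ℕ}
    (hn : ∀ y : G, (cls y).ncard ≤ n) :
    ∃ (Y : Subgroup G) (P : Set G), Y.Normal ∧ Y.FiniteIndex ∧ P.Finite ∧
      (∀ c ∈ P, ∀ w : G, w * c * w⁻¹ ∈ P) ∧ (1 : G) ∈ P ∧
      ∀ a ∈ Y, ∀ b ∈ Y, ⁅b, a⁆ ∈ P := by
  classical
  by_contra hcon
  push_neg at hcon
  have main : ∀ k : ℕ, ∃ x g : ℕ → G, ∀ j < k, INVat x g j := by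
    intro k
    induction k with
    | zero => exact ⟨fun _ => 1, fun _ => 1, fun j hj => absurd hj (by omega)⟩
    | succ k ih =>
        obtain ⟨x, g, hxg⟩ := ih
        have hYn : (Ycent x g k).Normal := centralizer_normal (Tset_conj x g k)
        have hYi : (Ycent x g k).FiniteIndex :=
          finiteIndex_centralizer_finite hFC (Tset_finite hFC x g k)
        obtain ⟨a, haY, b, hbY, hab⟩ := hcon (Ycent x g k) (Pset x g k) hYn hYi
          (Pset_finite hFC x g k) (Pset_conj x g k) (one_mem_Pset x g k)
        refine ⟨Function.update x k a, Function.update g k b, ?_⟩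
        intro j hj
        have hcong' : ∀ i < j, x i = Function.update x k a i ∧ g i = Function.update g k b i := by
          intro i hi
          have hik : i ≠ k := by omega
          rw [Function.update_of_ne hik, Function.update_of_ne hik]
          exact ⟨rfl, rfl⟩
        rcases Nat.lt_succ_iff_lt_or_eq.mp hj with hj' | rfl
        · have h0 := hxg j hj'
          have hjk : j ≠ k := by omega
          unfold INVat at h0 ⊢
          rw [Function.update_of_ne hjk, Function.update_of_ne hjk]
          rw [Ycent, ← Tset_congr hcong', ← Pset_congr hcong']
          exact h0
        · unfold INVat
          rw [Function.update_self, Function.update_self]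
          rw [Ycent, ← Tset_congr hcong', ← Pset_congr hcong']
          exact ⟨haY, hbY, hab⟩
  obtain ⟨x, g, hINV⟩ := main n
  -- commuting structure
  have hcomm1 : ∀ j < n, ∀ i < j, Commute (g j) (x i) := by
    intro j hj i hij
    have hmem := (hINV j hj).2.1
    rw [Ycent, Subgroup.mem_centralizer_iff] at hmem
    exact (hmem (x i) (mem_Tset_x hij)).symm
  have hcomm2 : ∀ j < n, ∀ i < n, j < i → Commute (g j) (x i) := by
    intro j hj i hi hji
    have hmem := (hINV i hi).1
    rw [Ycent, Subgroup.mem_centralizer_iff] at hmem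
    exact hmem (g j) (mem_Tset_g hji)
  -- prefix products
  set q : ℕ → G := fun j => (List.map x (List.range j)).prod with hq
  set r : ℕ → G := fun j => (List.map x (List.range' j (n - j))).prod with hr
  set y : G := q n with hy
  have hqsucc : ∀ j, q (j + 1) = q j * x j := by
    intro j
    rw [hq]
    simp [List.range_succ]
  have hrsucc : ∀ j < n, r j = x j * r (j + 1) := by
    intro j hj
    have h1 : n - j = (n - (j + 1)) + 1 := by omega
    show (List.map x (List.range' j (n - j))).prod = x j * (List.map x (List.range' (j+1) (n - (j+1)))).prod
    rw [h1, List.range'_succ]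
    simp
  have hqr : ∀ j ≤ n, q j * r j = y := by
    have H : ∀ d j, j + d = n → q j * r j = y := by
      intro d
      induction d with
      | zero =>
          intro j hj
          subst hj
          simp [hr, hy]
      | succ d ihd =>
          intro j hj
          have hjn : j < n := by omega
          rw [hrsucc j hjn, ← mul_assoc, ← hqsucc j]
          exact ihd (j + 1) (by omega)
    intro j hj
    exact H (n - j) j (by omega)
  -- u and v
  set u : ℕ → G := fun j => ⁅g j, x j⁆ with hu
  set v : ℕ → G := fun j => q j * u j * (q j)⁻¹ with hv
  -- conjugation of y by g j
  have hconjy : ∀ j < n, g j * y * (g j)⁻¹ = v j * y := by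
    intro j hj
    have hcq : Commute (g j) (q j) := by
      apply Commute.list_prod_right
      intro z hz
      simp only [List.mem_map, List.mem_range] at hz
      obtain ⟨i, hi, rfl⟩ := hz
      exact hcomm1 j hj i hi
    have hcr : Commute (g j) (r (j + 1)) := by
      apply Commute.list_prod_right
      intro z hz
      simp only [List.mem_map, List.mem_range'_1] at hz
      obtain ⟨i, ⟨hi1, hi2⟩, rfl⟩ := hz
      exact hcomm2 j hj i (by omega) (by omega)
    have hy' : y = q j * (x j * r (j + 1)) := by
      rw [← hqr j (by omega), hrsucc j hj]
    have hgx : g j * x j * (g j)⁻¹ = u j * x j := by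
      simp only [hu, commutatorElement_def]
      group
    calc g j * y * (g j)⁻¹
        = (g j * q j * (g j)⁻¹) * (g j * x j * (g j)⁻¹) * (g j * r (j+1) * (g j)⁻¹) := by
          rw [hy']; group
      _ = q j * (u j * x j) * r (j + 1) := by
          rw [hcq.eq, hcr.eq, hgx]
          group
      _ = v j * y := by
          simp only [hv]
          rw [hy']
          group
  -- v j ≠ 1
  have hvne : ∀ j < n, v j ≠ 1 := by
    intro j hj hveq
    have huj : u j = 1 := by
      have h' : q j * u j * (q j)⁻¹ = 1 := by simpa only [hv] using hveq
      calc u j = (q j)⁻¹ * (q j * u j * (q j)⁻¹) * q j := by group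
        _ = (q j)⁻¹ * 1 * q j := by rw [h']
        _ = 1 := by group
    apply (hINV j hj).2.2
    have h1 : ⁅g j, x j⁆ = (1 : G) := by simpa only [hu] using huj
    rw [h1]
    exact one_mem_Pset x g j
  -- v injective
  have hvinj : ∀ j < n, ∀ l < n, j < l → v j ≠ v l := by
    intro j hj l hl hjl hveq
    have hul : u l = ((q l)⁻¹ * q j) * u j * ((q l)⁻¹ * q j)⁻¹ := by
      have h' : q j * u j * (q j)⁻¹ = q l * u l * (q l)⁻¹ := by simpa only [hv] using hveq
      calc u l = (q l)⁻¹ * (q l * u l * (q l)⁻¹) * q l := by group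
        _ = (q l)⁻¹ * (q j * u j * (q j)⁻¹) * q l := by rw [← h']
        _ = ((q l)⁻¹ * q j) * u j * ((q l)⁻¹ * q j)⁻¹ := by group
    have : u l ∈ CsetC (g j) (x j) := by
      rw [hul, hu]
      exact CsetC_conj ⟨g j, x j, IsConj.refl _, IsConj.refl _, rfl⟩ _
    exact (hINV l hl).2.2 (CsetC_mem_Pset hjl this)
  -- conjugates
  have hclsmem : ∀ j < n, v j * y ∈ cls y := by
    intro j hj
    rw [← hconjy j hj]
    exact conj_mem_cls (self_mem_cls y) (g j)
  -- the finset
  have hcard : n + 1 ≤ (cls y).ncard := by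
    classical
    set F : Finset G := insert y ((Finset.range n).image (fun j => v j * y)) with hF
    have hsub : (F : Set G) ⊆ cls y := by
      intro z hz
      simp only [hF, Finset.coe_insert, Set.mem_insert_iff, Finset.coe_image,
        Set.mem_image, Finset.mem_coe, Finset.mem_range] at hz
      rcases hz with rfl | ⟨j, hj, rfl⟩
      · exact self_mem_cls y
      · exact hclsmem j hj
    have hinj : Set.InjOn (fun j => v j * y) (Finset.range n) := by
      intro j hj l hl heq
      simp only [Finset.coe_range, Set.mem_Iio] at hj hl
      by_contra hne
      have hvv : v j = v l := mul_right_cancel heq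
      rcases Nat.lt_or_ge j l with h | h
      · exact hvinj j hj l hl h hvv
      · exact hvinj l hl j hj (by omega) hvv.symm
    have hcard1 : ((Finset.range n).image (fun j => v j * y)).card = n := by
      rw [Finset.card_image_of_injOn (by simpa using hinj)]
      simp
    have hynotin : y ∉ (Finset.range n).image (fun j => v j * y) := by
      simp only [Finset.mem_image, Finset.mem_range]
      rintro ⟨j, hj, hjy⟩
      apply hvne j hj
      have : v j * y = 1 * y := by rw [hjy, one_mul]
      exact mul_right_cancel this
    have hcardF : F.card = n + 1 := by
      rw [hF, Finset.card_insert_of_notMem hynotin, hcard1]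
    calc n + 1 = F.card := hcardF.symm
      _ = (F : Set G).ncard := (Set.ncard_coe_finset F).symm
      _ ≤ (cls y).ncard := Set.ncard_le_ncard hsub (hFC y)
  have := hn y
  omega

end PartC

section PartD

/-- conjugacy classes of a quotient are images of conjugacy classes -/
lemma cls_of_surjective {K : Type*} [Group K] (f : G →* K) (hf : Function.Surjective f)
    (a : G) : cls (f a) = f '' cls a := by
  ext h
  constructor
  · intro hh
    obtain ⟨c, hc⟩ := isConj_iff.mp hh
    obtain ⟨w, rfl⟩ := hf c
    exact ⟨w * a * w⁻¹, conj_mem_cls (self_mem_cls a) w, by rw [← hc]; simp⟩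
  · rintro ⟨b, hb, rfl⟩
    exact f.map_isConj hb

lemma normal_closure_of_conj {P : Set G} (hPconj : ∀ c ∈ P, ∀ w : G, w * c * w⁻¹ ∈ P) :
    (Subgroup.closure P).Normal := by
  constructor
  intro m hm w
  have hmap : (Subgroup.closure P).map (MulAut.conj w).toMonoidHom ≤ Subgroup.closure P := by
    rw [MonoidHom.map_closure]
    apply Subgroup.closure_mono
    rintro c ⟨d, hd, rfl⟩
    exact hPconj d hd w
  exact hmap ⟨m, hm, rfl⟩

theorem commutator_finite_of_bfc (hFC : ∀ g : G, {h : G | IsConj g h}.Finite)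
    {n : ℕ} (hn : ∀ y : G, (cls y).ncard ≤ n)
    (htor : ∀ a : G, IsOfFinOrder a) :
    Finite (_root_.commutator G) := by
  classical
  obtain ⟨Y, P, hYn, hYi, hPfin, hPconj, hP1, hYP⟩ := stopping hFC hn
  set Pstar : Subgroup G := Subgroup.closure P with hPstar
  have hPstarFin : ((Pstar : Subgroup G) : Set G).Finite :=
    dietzmann hPfin hPconj (fun a _ => htor a)
  haveI hPstarNormal : Pstar.Normal := normal_closure_of_conj hPconj
  set π := QuotientGroup.mk' Pstar with hπ
  have hπsurj : Function.Surjective π := QuotientGroup.mk'_surjective Pstar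
  -- FC and torsion in the quotient
  have hFCbar : ∀ z : G ⧸ Pstar, (cls z).Finite := by
    intro z
    obtain ⟨a, rfl⟩ := hπsurj z
    rw [cls_of_surjective π hπsurj a]
    exact (hFC a).image π
  have htorbar : ∀ z : G ⧸ Pstar, IsOfFinOrder z := by
    intro z
    obtain ⟨a, rfl⟩ := hπsurj z
    exact π.isOfFinOrder (htor a)
  -- the image of Y
  set Ybar : Subgroup (G ⧸ Pstar) := Y.map π with hYbar
  haveI hYbarNormal : Ybar.Normal := hYn.map π hπsurj
  haveI hYbarIdx : Ybar.FiniteIndex := by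
    haveI : (Ybar.comap π).FiniteIndex :=
      Subgroup.finiteIndex_of_le (Subgroup.le_comap_map π Y)
    exact ⟨by rw [← Subgroup.index_comap_of_surjective _ hπsurj]; exact
      Subgroup.FiniteIndex.index_ne_zero⟩
  have habel : ∀ a ∈ Ybar, ∀ b ∈ Ybar, a * b = b * a := by
    rintro a ha b hb
    obtain ⟨y1, hy1, rfl⟩ := ha
    obtain ⟨y2, hy2, rfl⟩ := hb
    have h1 : ⁅(π y2 : G ⧸ Pstar), π y1⁆ = 1 := by
      rw [← map_commutatorElement]
      rw [hπ, QuotientGroup.mk'_apply, QuotientGroup.eq_one_iff]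
      exact Subgroup.subset_closure (hYP y1 hy1 y2 hy2)
    have := commutatorElement_eq_one_iff_commute.mp h1
    exact this.symm.eq
  -- the set of commutators with an entry in Ybar
  set Cbar : Set (G ⧸ Pstar) := {c | ∃ h ∈ Ybar, ∃ z : G ⧸ Pstar, c = ⁅h, z⁆} with hCbar
  have hCbarConj : ∀ c ∈ Cbar, ∀ w : G ⧸ Pstar, w * c * w⁻¹ ∈ Cbar := by
    rintro c ⟨h, hh, z, rfl⟩ w
    exact ⟨w * h * w⁻¹, hYbarNormal.conj_mem h hh w, w * z * w⁻¹,
      conjugate_commutatorElement _ _ _⟩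
  have hCbarFin : Cbar.Finite := by
    haveI : Finite ((G ⧸ Pstar) ⧸ Ybar) := Subgroup.finite_quotient_of_finiteIndex
    have hsub : Cbar ⊆ ⋃ qq : (G ⧸ Pstar) ⧸ Ybar,
        (fun c => c * (Quotient.out qq)⁻¹) '' cls (Quotient.out qq) := by
      rintro c ⟨h, hh, z, rfl⟩
      set qq : (G ⧸ Pstar) ⧸ Ybar := QuotientGroup.mk z with hqq
      set t : G ⧸ Pstar := Quotient.out qq with ht
      have htz : t⁻¹ * z ∈ Ybar := by
        rw [← QuotientGroup.eq]
        rw [ht, hqq]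
        exact Quotient.out_eq _
      set yy : G ⧸ Pstar := t⁻¹ * z with hyy
      have hz : z = t * yy := by rw [hyy]; group
      have hcomm : yy * h⁻¹ = h⁻¹ * yy := habel yy htz h⁻¹ (Ybar.inv_mem hh)
      have hceq : ⁅h, z⁆ = ⁅h, t⁆ := by
        rw [hz]
        calc ⁅h, t * yy⁆ = h * t * (yy * h⁻¹) * yy⁻¹ * t⁻¹ := by
              simp only [commutatorElement_def]; group
          _ = h * t * h⁻¹ * (yy * yy⁻¹) * t⁻¹ := by rw [hcomm]; group
          _ = ⁅h, t⁆ := by simp only [commutatorElement_def]; group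
      refine Set.mem_iUnion.mpr ⟨qq, ⟨h * t * h⁻¹, conj_mem_cls (self_mem_cls t) h, ?_⟩⟩
      rw [hceq]
      simp only [commutatorElement_def]
      group
      rfl
    exact (Set.Finite.subset (Set.finite_iUnion
      (fun qq => (hFCbar _).image _)) hsub)
  set L : Subgroup (G ⧸ Pstar) := Subgroup.closure Cbar with hL
  have hLfin : ((L : Subgroup (G ⧸ Pstar)) : Set (G ⧸ Pstar)).Finite :=
    dietzmann hCbarFin hCbarConj (fun a _ => htorbar a)
  haveI hLNormal : L.Normal := normal_closure_of_conj hCbarConj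
  set π₂ := QuotientGroup.mk' L with hπ₂
  have hπ₂surj : Function.Surjective π₂ := QuotientGroup.mk'_surjective L
  -- image of Ybar is central
  have hcent : Ybar.map π₂ ≤ Subgroup.center ((G ⧸ Pstar) ⧸ L) := by
    rintro z ⟨yy, hyy, rfl⟩
    rw [Subgroup.mem_center_iff]
    intro g2
    obtain ⟨w, rfl⟩ := hπ₂surj g2
    have h1 : ⁅(π₂ yy : (G ⧸ Pstar) ⧸ L), π₂ w⁆ = 1 := by
      rw [← map_commutatorElement, hπ₂, QuotientGroup.mk'_apply, QuotientGroup.eq_one_iff]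
      exact Subgroup.subset_closure ⟨yy, hyy, w, rfl⟩
    exact (commutatorElement_eq_one_iff_commute.mp h1).symm.eq
  haveI hmapIdx : (Ybar.map π₂).FiniteIndex := by
    haveI : ((Ybar.map π₂).comap π₂).FiniteIndex :=
      Subgroup.finiteIndex_of_le (Subgroup.le_comap_map π₂ Ybar)
    exact ⟨by rw [← Subgroup.index_comap_of_surjective _ hπ₂surj]; exact
      Subgroup.FiniteIndex.index_ne_zero⟩
  haveI hcenterIdx : (Subgroup.center ((G ⧸ Pstar) ⧸ L)).FiniteIndex :=
    Subgroup.finiteIndex_of_le hcent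
  -- finitely many commutators in the double quotient
  haveI : Finite (commutatorSet ((G ⧸ Pstar) ⧸ L)) := by
    haveI : Finite (((G ⧸ Pstar) ⧸ L) ⧸ Subgroup.center ((G ⧸ Pstar) ⧸ L)) :=
      Subgroup.finite_quotient_of_finiteIndex
    set Z := Subgroup.center ((G ⧸ Pstar) ⧸ L) with hZ
    have hsub : commutatorSet ((G ⧸ Pstar) ⧸ L) ⊆ Set.range
        (fun pq : (((G ⧸ Pstar) ⧸ L) ⧸ Z) × (((G ⧸ Pstar) ⧸ L) ⧸ Z) =>
          ⁅(Quotient.out pq.1 : (G ⧸ Pstar) ⧸ L), Quotient.out pq.2⁆) := by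
      rintro c ⟨a, b, rfl⟩
      refine ⟨(QuotientGroup.mk a, QuotientGroup.mk b), ?_⟩
      set ta : (G ⧸ Pstar) ⧸ L := Quotient.out (QuotientGroup.mk a : ((G ⧸ Pstar) ⧸ L) ⧸ Z)
        with hta
      set tb : (G ⧸ Pstar) ⧸ L := Quotient.out (QuotientGroup.mk b : ((G ⧸ Pstar) ⧸ L) ⧸ Z)
        with htb
      have hza : ta⁻¹ * a ∈ Z := by
        rw [← QuotientGroup.eq, hta]
        exact Quotient.out_eq _
      have hzb : tb⁻¹ * b ∈ Z := by
        rw [← QuotientGroup.eq, htb]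
        exact Quotient.out_eq _
      have hca := Subgroup.mem_center_iff.mp hza
      have hcb := Subgroup.mem_center_iff.mp hzb
      show ⁅ta, tb⁆ = ⁅a, b⁆
      set za := ta⁻¹ * a with hza'
      set zb := tb⁻¹ * b with hzb'
      have ha' : a = ta * za := by rw [hza']; group
      have hb' : b = tb * zb := by rw [hzb']; group
      have c1 : za * tb = tb * za := (hca tb).symm
      have c2 : za * zb = zb * za := hcb za
      have c3 : zb * ta⁻¹ = ta⁻¹ * zb := (hcb ta⁻¹).symm
      have h1 : ta * za * (tb * zb) * (ta * za)⁻¹ * (tb * zb)⁻¹ = ta * tb * ta⁻¹ * tb⁻¹ := by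
        calc ta * za * (tb * zb) * (ta * za)⁻¹ * (tb * zb)⁻¹
            = ta * (za * tb) * (zb * za⁻¹) * ta⁻¹ * zb⁻¹ * tb⁻¹ := by group
          _ = ta * (tb * za) * (zb * za⁻¹) * ta⁻¹ * zb⁻¹ * tb⁻¹ := by rw [c1]
          _ = ta * tb * (za * zb) * (za⁻¹ * ta⁻¹) * zb⁻¹ * tb⁻¹ := by group
          _ = ta * tb * (zb * za) * (za⁻¹ * ta⁻¹) * zb⁻¹ * tb⁻¹ := by rw [c2]
          _ = ta * tb * (zb * ta⁻¹) * zb⁻¹ * tb⁻¹ := by group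
          _ = ta * tb * (ta⁻¹ * zb) * zb⁻¹ * tb⁻¹ := by rw [c3]
          _ = ta * tb * ta⁻¹ * tb⁻¹ := by group
      rw [commutatorElement_def, commutatorElement_def]
      conv_rhs => rw [ha', hb']
      rw [h1]
    exact Set.Finite.to_subtype ((Set.finite_range _).subset hsub)
  haveI : Finite (_root_.commutator ((G ⧸ Pstar) ⧸ L)) := inferInstance
  -- pull everything back
  set Φ : G →* (G ⧸ Pstar) ⧸ L := π₂.comp π with hΦ
  have hΦsurj : Function.Surjective Φ := hπ₂surj.comp hπsurj
  -- kernel of Φ is finite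
  have hkerfin : Finite (MonoidHom.ker Φ) := by
    set ρ : MonoidHom.ker Φ →* G ⧸ Pstar := π.comp (MonoidHom.ker Φ).subtype with hρ
    apply finite_of_ker_range ρ
    · haveI : Finite Pstar := hPstarFin.to_subtype
      have hmemP : ∀ k : MonoidHom.ker ρ, ((k : MonoidHom.ker Φ) : G) ∈ Pstar := by
        intro k
        have hk : ρ (k : MonoidHom.ker Φ) = 1 := k.2
        exact (QuotientGroup.eq_one_iff _).mp hk
      have hinj : Function.Injective
          (fun k : MonoidHom.ker ρ => (⟨((k : MonoidHom.ker Φ) : G), hmemP k⟩ : Pstar)) := by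
        intro k1 k2 h12
        simp only [Subtype.mk.injEq] at h12
        exact Subtype.ext (Subtype.ext h12)
      exact Finite.of_injective _ hinj
    · haveI : Finite L := hLfin.to_subtype
      have hmemL : ∀ k : MonoidHom.range ρ, (k : G ⧸ Pstar) ∈ L := by
        intro k
        obtain ⟨a, ha⟩ := k.2
        have ha2 : Φ (a : G) = 1 := a.2
        have hL2 : (π (a : G)) ∈ L := (QuotientGroup.eq_one_iff _).mp ha2
        have hk : ρ a = (k : G ⧸ Pstar) := ha
        rw [← hk]
        exact hL2
      have hinj : Function.Injective
          (fun k : MonoidHom.range ρ => (⟨(k : G ⧸ Pstar), hmemL k⟩ : L)) := by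
        intro k1 k2 h12
        simp only [Subtype.mk.injEq] at h12
        exact Subtype.ext h12
      exact Finite.of_injective _ hinj
  -- commutator G is finite
  set f₀ : _root_.commutator G →* (G ⧸ Pstar) ⧸ L := Φ.comp (Subgroup.subtype _) with hf₀
  apply finite_of_ker_range f₀
  · have hmemK : ∀ k : MonoidHom.ker f₀, ((k : _root_.commutator G) : G) ∈ MonoidHom.ker Φ := by
      intro k
      exact k.2
    have hinj : Function.Injective
        (fun k : MonoidHom.ker f₀ =>
          (⟨((k : _root_.commutator G) : G), hmemK k⟩ : MonoidHom.ker Φ)) := by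
      intro k1 k2 h12
      simp only [Subtype.mk.injEq] at h12
      exact Subtype.ext (Subtype.ext h12)
    exact Finite.of_injective _ hinj
  · have hmapcomm : (_root_.commutator G).map Φ ≤ _root_.commutator ((G ⧸ Pstar) ⧸ L) := by
      rw [_root_.commutator, Subgroup.map_commutator]
      exact Subgroup.commutator_mono le_top le_top
    have hmemC : ∀ k : MonoidHom.range f₀,
        (k : (G ⧸ Pstar) ⧸ L) ∈ _root_.commutator ((G ⧸ Pstar) ⧸ L) := by
      intro k
      obtain ⟨a, ha⟩ := k.2
      have hk : Φ (a : G) = (k : (G ⧸ Pstar) ⧸ L) := ha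
      rw [← hk]
      exact hmapcomm ⟨(a : G), a.2, rfl⟩
    have hinj : Function.Injective
        (fun k : MonoidHom.range f₀ => (⟨(k : (G ⧸ Pstar) ⧸ L), hmemC k⟩ :
          _root_.commutator ((G ⧸ Pstar) ⧸ L))) := by
      intro k1 k2 h12
      simp only [Subtype.mk.injEq] at h12
      exact Subtype.ext h12
    exact Finite.of_injective _ hinj

end PartD

section PartE

lemma centralizer_set_infinite [Infinite G] (hFC : ∀ g : G, {h : G | IsConj g h}.Finite)
    (l : List G) : {z : G | ∀ a ∈ l, Commute z a}.Infinite := by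
  classical
  haveI : Finite {a : G // a ∈ l} := (l.finite_toSet).to_subtype
  haveI : ∀ a : {a : G // a ∈ l}, Finite {h : G // IsConj (a : G) h} :=
    fun a => (hFC (a : G)).to_subtype
  let f : G → (∀ a : {a : G // a ∈ l}, {h : G // IsConj (a : G) h}) :=
    fun g a => ⟨g * a * g⁻¹, isConj_iff.mpr ⟨g, rfl⟩⟩
  obtain ⟨v, hv⟩ := Finite.exists_infinite_fiber f
  have hfib : (f ⁻¹' {v}).Infinite := Set.infinite_coe_iff.mp hv
  obtain ⟨g₀, hg₀⟩ := hfib.nonempty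
  have hsub : (fun z => g₀⁻¹ * z) '' (f ⁻¹' {v}) ⊆ {z : G | ∀ a ∈ l, Commute z a} := by
    rintro _ ⟨z, hz, rfl⟩
    intro a ha
    have h1 : f z = f g₀ := by
      rw [Set.mem_preimage, Set.mem_singleton_iff] at hz hg₀
      rw [hz, hg₀]
    have h2 : z * a * z⁻¹ = g₀ * a * g₀⁻¹ :=
      congrArg Subtype.val (congrFun h1 ⟨a, ha⟩)
    show g₀⁻¹ * z * a = a * (g₀⁻¹ * z)
    calc g₀⁻¹ * z * a = g₀⁻¹ * (z * a * z⁻¹) * z := by group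
      _ = g₀⁻¹ * (g₀ * a * g₀⁻¹) * z := by rw [h2]
      _ = a * (g₀⁻¹ * z) := by group
  exact ((hfib.image (Set.injOn_of_injective (mul_right_injective g₀⁻¹))).mono hsub)

lemma exists_infinite_commuting_subset [Infinite G]
    (hFC : ∀ g : G, {h : G | IsConj g h}.Finite) :
    ∃ A : Set G, A.Infinite ∧ ∀ a ∈ A, ∀ b ∈ A, Commute a b := by
  classical
  have step : ∀ l : List G, ∃ z : G, z ∉ l ∧ ∀ a ∈ l, Commute z a := by
    intro l
    have h2 : ({z : G | ∀ a ∈ l, Commute z a} \ {z | z ∈ l}).Infinite :=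
      (centralizer_set_infinite hFC l).diff l.finite_toSet
    obtain ⟨z, hz⟩ := h2.nonempty
    exact ⟨z, hz.2, hz.1⟩
  choose next hnext1 hnext2 using step
  let seq : ℕ → List G := fun n => Nat.rec [] (fun _ prev => next prev :: prev) n
  have hseq_succ : ∀ n, seq (n + 1) = next (seq n) :: seq n := fun n => rfl
  have hlen : ∀ n, (seq n).length = n := by
    intro n
    induction n with
    | zero => rfl
    | succ n ih =>
        show (next (seq n) :: seq n).length = n + 1
        rw [List.length_cons, ih]
  have hnodup : ∀ n, (seq n).Nodup := by
    intro n
    induction n with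
    | zero => exact List.nodup_nil
    | succ n ih =>
        rw [hseq_succ]
        exact List.Nodup.cons (hnext1 (seq n)) ih
  have hcomm : ∀ n, ∀ a ∈ seq n, ∀ b ∈ seq n, Commute a b := by
    intro n
    induction n with
    | zero => intro a ha; exact absurd ha (List.not_mem_nil)
    | succ n ih =>
        intro a ha b hb
        rw [hseq_succ] at ha hb
        rcases List.mem_cons.mp ha with rfl | ha' <;>
          rcases List.mem_cons.mp hb with h | hb'
        · rw [h]
        · exact hnext2 (seq n) b hb'
        · rw [h]; exact (hnext2 (seq n) a ha').symm
        · exact ih a ha' b hb'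
  have hmono : ∀ m n, m ≤ n → ∀ a ∈ seq m, a ∈ seq n := by
    intro m n hmn
    induction n with
    | zero =>
        have : m = 0 := by omega
        subst this; exact fun a ha => ha
    | succ n ih =>
        rcases Nat.lt_succ_iff_lt_or_eq.mp (Nat.lt_succ_of_le hmn) with h | rfl
        · intro a ha
          rw [hseq_succ]
          exact List.mem_cons_of_mem _ (ih (by omega) a ha)
        · exact fun a ha => ha
  refine ⟨{a : G | ∃ n, a ∈ seq n}, ?_, ?_⟩
  · intro hfin
    set m := hfin.toFinset.card with hm
    have hsubm : (seq (m + 1)).toFinset ⊆ hfin.toFinset := by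
      intro a ha
      rw [Set.Finite.mem_toFinset]
      exact ⟨m + 1, List.mem_toFinset.mp ha⟩
    have hcard : (seq (m + 1)).toFinset.card = m + 1 := by
      rw [List.toFinset_card_of_nodup (hnodup (m + 1))]
      exact hlen (m + 1)
    have := Finset.card_le_card hsubm
    omega
  · rintro a ⟨ma, ha⟩ b ⟨mb, hb⟩
    rcases le_total ma mb with h | h
    · exact hcomm mb a (hmono ma mb h a ha) b hb
    · exact (hcomm ma b (hmono mb ma h b hb) a ha).symm

lemma omega_infinite {p : ℕ} (hp : 1 < p) :
    ∀ (E : ℕ) (H : Type*) [Group H], Infinite H → (∀ a b : H, Commute a b) →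
    (∀ a : H, a ^ p ^ E = 1) → {a : H | a ^ p = 1}.Infinite := by
  intro E
  induction E with
  | zero =>
      intro H _ hInf hcomm hexp
      haveI := hInf
      exfalso
      obtain ⟨a, b, hab⟩ := exists_pair_ne H
      apply hab
      have h1 : a ^ p ^ 0 = 1 := hexp a
      have h2 : b ^ p ^ 0 = 1 := hexp b
      simp only [pow_zero, pow_one] at h1 h2
      rw [h1, h2]
  | succ E ih =>
      intro H _ hInf hcomm hexp
      haveI := hInf
      by_contra hK
      rw [Set.not_infinite] at hK
      let ψ : H →* H :=
        { toFun := fun a => a ^ p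
          map_one' := one_pow p
          map_mul' := fun a b => (hcomm a b).mul_pow p }
      have hfib : ∀ r : H, {a : H | a ^ p = r}.Finite := by
        intro r
        by_cases hr : ∃ a₀ : H, a₀ ^ p = r
        · obtain ⟨a₀, ha₀⟩ := hr
          have hsub : {a : H | a ^ p = r} ⊆ (fun k => k * a₀) '' {a : H | a ^ p = 1} := by
            intro a ha
            refine ⟨a * a₀⁻¹, ?_, by group⟩
            show (a * a₀⁻¹) ^ p = 1
            rw [(hcomm a a₀⁻¹).mul_pow, inv_pow, ha₀, ha]
            exact mul_inv_cancel r
          exact (hK.image _).subset hsub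
        · have : {a : H | a ^ p = r} = ∅ := by
            ext a; simp only [Set.mem_setOf_eq, Set.mem_empty_iff_false, iff_false]
            exact fun ha => hr ⟨a, ha⟩
          rw [this]; exact Set.finite_empty
      haveI hRinf : Infinite ψ.range := by
        by_contra hfin
        rw [not_infinite_iff_finite] at hfin
        haveI : Finite ψ.range := hfin
        have hcover : (Set.univ : Set H) ⊆ ⋃ r : ψ.range, {a : H | a ^ p = (r : H)} := by
          intro a _
          exact Set.mem_iUnion.mpr ⟨⟨ψ a, ⟨a, rfl⟩⟩, rfl⟩
        have : (Set.univ : Set H).Finite :=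
          (Set.finite_iUnion (fun r : ψ.range => hfib (r : H))).subset hcover
        exact Set.infinite_univ this
      have hcommR : ∀ a b : ψ.range, Commute a b := by
        intro a b
        have := hcomm (a : H) (b : H)
        exact Subtype.ext this
      have hexpR : ∀ a : ψ.range, a ^ p ^ E = 1 := by
        rintro ⟨_, ⟨a, rfl⟩⟩
        apply Subtype.ext
        push_cast
        show (ψ a : H) ^ p ^ E = 1
        show (a ^ p) ^ p ^ E = 1
        rw [← pow_mul, ← pow_succ']
        exact hexp a
      have hΩR := ih ψ.range hRinf hcommR hexpR
      have himg : (Subtype.val '' {r : ψ.range | r ^ p = 1}).Infinite :=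
        hΩR.image (Set.injOn_of_injective Subtype.val_injective)
      have hsub2 : Subtype.val '' {r : ψ.range | r ^ p = 1} ⊆ {a : H | a ^ p = 1} := by
        rintro _ ⟨r, hr, rfl⟩
        show (r : H) ^ p = 1
        have := congrArg Subtype.val hr
        push_cast at this
        exact this
      exact (himg.mono hsub2) hK

lemma closure_commute {Aset : Set G} (hAcomm : ∀ a ∈ Aset, ∀ b ∈ Aset, Commute a b) :
    ∀ a b : Subgroup.closure Aset, Commute a b := by
  intro a b
  have h1 : (a : G) ∈ Subgroup.centralizer Aset := by
    have : Subgroup.closure Aset ≤ Subgroup.centralizer Aset := by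
      rw [Subgroup.closure_le]
      intro s hs
      rw [SetLike.mem_coe, Subgroup.mem_centralizer_iff]
      intro t ht
      exact (hAcomm t ht s hs).eq
    exact this a.2
  have h2 : (b : G) ∈ Subgroup.centralizer {(a : G)} := by
    have hsub : Aset ⊆ (Subgroup.centralizer {(a : G)} : Set G) := by
      intro s hs
      rw [SetLike.mem_coe, Subgroup.mem_centralizer_iff]
      intro t ht
      rw [Set.mem_singleton_iff] at ht
      subst ht
      exact ((Subgroup.mem_centralizer_iff.mp h1) s hs).symm
    have : Subgroup.closure Aset ≤ Subgroup.centralizer {(a : G)} :=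
      (Subgroup.closure_le _).mpr hsub
    exact this b.2
  have hvals := Subgroup.mem_centralizer_iff.mp h2 (a : G) rfl
  apply Subtype.ext
  push_cast
  exact hvals

end PartE

end St11

open scoped commutatorElement

theorem stmt11 (G : Type*) [Group G] [Infinite G] (hFC : IsFCGroup G)
    (hfin : HasFinitelyManyAutOrbits G) (p : ℕ) (hp : p.Prime) (hpG : IsPGroup p G)
    (hna : ¬ ∀ a b : G, a * b = b * a) :
    ∃ h g : G, h ∈ commutator G ∧ g ∉ commutator G ∧ orderOf h = orderOf g := by
  classical
  haveI : Fact p.Prime := ⟨hp⟩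
  obtain ⟨n, hcls, hord⟩ := St11.exists_bounds (G := G) hfin
  have hFC' : ∀ g : G, {h : G | IsConj g h}.Finite := hFC
  have htor : ∀ a : G, IsOfFinOrder a := by
    intro a
    obtain ⟨k, hk⟩ := hpG a
    exact isOfFinOrder_iff_pow_eq_one.mpr ⟨p ^ k, pow_pos hp.pos k, hk⟩
  -- all orders are powers of p and bounded, giving a uniform exponent
  have hexp : ∀ a : G, a ^ p ^ n = 1 := by
    intro a
    obtain ⟨k, hk⟩ := hpG a
    obtain ⟨j, hj, hoj⟩ := (Nat.dvd_prime_pow hp).mp (orderOf_dvd_of_pow_eq_one hk)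
    have h2 : p ^ j ≤ n := hoj ▸ hord a
    have hjn : j ≤ n := by
      by_contra hc
      push_neg at hc
      have h3 : n < p ^ n := Nat.lt_pow_self hp.one_lt
      have h4 : p ^ n ≤ p ^ j := Nat.pow_le_pow_right hp.pos (by omega)
      omega
    apply orderOf_dvd_iff_pow_eq_one.mp
    rw [hoj]
    exact pow_dvd_pow p hjn
  -- the commutator subgroup is finite (Neumann's theorem)
  haveI hGfin : Finite (commutator G) := St11.commutator_finite_of_bfc hFC' hcls htor
  have hGsetfin : ((commutator G : Subgroup G) : Set G).Finite := Set.toFinite _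
  -- an element of order p inside the commutator subgroup
  push_neg at hna
  obtain ⟨a, b, hab⟩ := hna
  have hc1 : ⁅a, b⁆ ≠ 1 := fun h => hab (commutatorElement_eq_one_iff_commute.mp h)
  have hcmem : ⁅a, b⁆ ∈ commutator G :=
    Subgroup.commutator_mem_commutator (Subgroup.mem_top a) (Subgroup.mem_top b)
  obtain ⟨k, hk⟩ := hpG ⁅a, b⁆
  obtain ⟨j, hj, hoj⟩ := (Nat.dvd_prime_pow hp).mp (orderOf_dvd_of_pow_eq_one hk)
  have hj1 : 1 ≤ j := by
    by_contra hc
    push_neg at hc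
    have hj0 : j = 0 := by omega
    rw [hj0, pow_zero] at hoj
    exact hc1 (orderOf_eq_one_iff.mp hoj)
  set hmain : G := ⁅a, b⁆ ^ (p ^ (j - 1)) with hhmain
  have hhord : orderOf hmain = p := by
    rw [hhmain, orderOf_pow' _ (pow_ne_zero _ hp.ne_zero), hoj,
      Nat.gcd_eq_right (pow_dvd_pow p (by omega)), Nat.pow_div (by omega) hp.pos,
      show j - (j - 1) = 1 by omega, pow_one]
  have hhmem : hmain ∈ commutator G := pow_mem hcmem _
  -- an infinite abelian subgroup
  obtain ⟨Aset, hAinf, hAcomm⟩ := St11.exists_infinite_commuting_subset hFC'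
  set A : Subgroup G := Subgroup.closure Aset with hA
  have hAcomm' : ∀ z w : A, Commute z w := St11.closure_commute hAcomm
  haveI hAInf : Infinite A := by
    have h1 : ((A : Subgroup G) : Set G).Infinite := hAinf.mono Subgroup.subset_closure
    exact h1.to_subtype
  have hexpA : ∀ z : A, z ^ p ^ n = 1 := by
    intro z
    apply Subtype.ext
    push_cast
    exact hexp (z : G)
  have hΩ := St11.omega_infinite hp.one_lt n A hAInf hAcomm' hexpA
  -- there are infinitely many elements of G with g^p = 1, pick one outside the commutator
  have himg : (Subtype.val '' {z : A | z ^ p = 1}).Infinite :=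
    hΩ.image (Set.injOn_of_injective Subtype.val_injective)
  have hpick := (himg.diff hGsetfin).nonempty
  obtain ⟨g0, hg0mem, hg0not⟩ := hpick
  obtain ⟨z0, hz0, rfl⟩ := hg0mem
  have hg0pow : (z0 : G) ^ p = 1 := by
    have := congrArg Subtype.val hz0
    push_cast at this
    exact this
  have hg0ne : (z0 : G) ≠ 1 := by
    intro h1
    exact hg0not (h1 ▸ (Subgroup.one_mem (commutator G)))
  have hg0ord : orderOf (z0 : G) = p := orderOf_eq_prime hg0pow hg0ne
  exact ⟨hmain, (z0 : G), hhmem, hg0not, by rw [hhord, hg0ord]⟩
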